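/- In the EM algorithm, the observed-data log-likelihood is non-decreasing along iterations: if Θ^{(n+1)} maximizes (or increases) the expected complete-data log-likelihood Q(Θ | Θ^{(n)}) = E[log p(X, Z | Θ) | X, Θ^{(n)}], then log L(Θ^{(n+1)}) ≥ log L(Θ^{(n)}). -/

import Mathlib

open Finset

/-- Monotonicity of the EM algorithm for a latent-variable model with finitely many
latent states. Here `p θ z > 0` is the joint density of the observed data together with
the latent value `z` under parameter `θ` (the observed data being fixed),
`L θ = ∑_z p θ z` is the observed-data likelihood, and
`Q(θ | θ') = ∑_z (p θ' z / L θ') log (p θ z)` is the expected complete-data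
log-likelihood. If the update `θ₁` increases `Q(· | θ₀)`, i.e. `Q(θ₁ | θ₀) ≥ Q(θ₀ | θ₀)`,
then the observed-data log-likelihood does not decrease: `log L(θ₁) ≥ log L(θ₀)`. -/
theorem em_loglikelihood_nondecreasing
    {Θ : Type*} {Z : Type*} [Fintype Z] [Nonempty Z]
    (p : Θ → Z → ℝ) (hpos : ∀ θ z, 0 < p θ z)
    (θ₀ θ₁ : Θ)
    (hQ : (∑ z, (p θ₀ z / ∑ z', p θ₀ z') * Real.log (p θ₁ z)) ≥
          (∑ z, (p θ₀ z / ∑ z', p θ₀ z') * Real.log (p θ₀ z))) :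
    Real.log (∑ z, p θ₁ z) ≥ Real.log (∑ z, p θ₀ z) := by
  set S0 : ℝ := ∑ z', p θ₀ z' with hS0def
  set S1 : ℝ := ∑ z', p θ₁ z' with hS1def
  have hS0 : 0 < S0 := Finset.sum_pos (fun z _ => hpos θ₀ z) univ_nonempty
  have hS1 : 0 < S1 := Finset.sum_pos (fun z _ => hpos θ₁ z) univ_nonempty
  set w : Z → ℝ := fun z => p θ₀ z / S0 with hwdef
  have hw : ∀ z, 0 < w z := fun z => div_pos (hpos θ₀ z) hS0
  have hwsum : ∑ z, w z = 1 := by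
    simp [hwdef, ← Finset.sum_div, div_self hS0.ne']
    exact div_self hS0.ne'
  set r : Z → ℝ := fun z => (p θ₁ z / S1) / w z with hrdef
  have hr : ∀ z, 0 < r z := fun z => div_pos (div_pos (hpos θ₁ z) hS1) (hw z)
  -- KL nonnegativity via log x ≤ x - 1
  have hkl : ∑ z, w z * Real.log (r z) ≤ 0 := by
    have h1 : ∑ z, w z * Real.log (r z) ≤ ∑ z, w z * (r z - 1) :=
      Finset.sum_le_sum fun z _ =>
        mul_le_mul_of_nonneg_left (Real.log_le_sub_one_of_pos (hr z)) (hw z).le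
    have h2 : ∑ z, w z * (r z - 1) = 0 := by
      have : ∀ z, w z * (r z - 1) = p θ₁ z / S1 - w z := by
        intro z
        rw [mul_sub, mul_one, hrdef]
        simp only
        rw [mul_comm, div_mul_cancel₀ _ (hw z).ne']
      simp only [this, Finset.sum_sub_distrib, hwsum, ← Finset.sum_div]
      rw [div_self hS1.ne']
      ring
    linarith
  -- expand log r
  have hlog : ∀ z, Real.log (r z) =
      (Real.log (p θ₁ z) - Real.log (p θ₀ z)) - (Real.log S1 - Real.log S0) := by
    intro z
    rw [hrdef]
    simp only
    rw [Real.log_div (div_pos (hpos θ₁ z) hS1).ne' (hw z).ne',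
        Real.log_div (hpos θ₁ z).ne' hS1.ne', hwdef,
        Real.log_div (hpos θ₀ z).ne' hS0.ne']
    ring
  have hexp : ∑ z, w z * Real.log (r z) =
      (∑ z, w z * Real.log (p θ₁ z)) - (∑ z, w z * Real.log (p θ₀ z))
        - (Real.log S1 - Real.log S0) := by
    simp only [hlog, mul_sub, Finset.sum_sub_distrib, ← Finset.sum_mul, hwsum]
    ring
  have hQ' : (∑ z, w z * Real.log (p θ₁ z)) ≥ ∑ z, w z * Real.log (p θ₀ z) := hQ
  linarith [hexp ▸ hkl]
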